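/- Let k ≥ 1, let ℓ ≥ 1 and r_1, …, r_k ≥ 1 be integers, and let u_1, …, u_k be integers. Let A be the (k+1) × (k+1) lower-triangular integer matrix with first column (ℓ, u_1, …, u_k), with remaining diagonal entries r_1, …, r_k, and zeros elsewhere. If the exponent of the finite abelian group ℤ^{k+1}/A·ℤ^{k+1} is squarefree, then for every i, gcd(ℓ, r_i) divides u_i. -/

import Mathlib

theorem stmt_7 (k : ℕ) (hk : 1 ≤ k) (ℓ : ℤ) (r u : Fin k → ℤ)
    (hℓ : 1 ≤ ℓ) (hr : ∀ i, 1 ≤ r i)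
    (A : Matrix (Fin (k + 1)) (Fin (k + 1)) ℤ)
    (hA00 : A 0 0 = ℓ)
    (hAcol : ∀ i : Fin k, A i.succ 0 = u i)
    (hAdiag : ∀ i : Fin k, A i.succ i.succ = r i)
    (hAzero : ∀ i j : Fin (k + 1), j ≠ 0 → i ≠ j → A i j = 0)
    (hsf : Squarefree
      (AddMonoid.exponent ((Fin (k + 1) → ℤ) ⧸ LinearMap.range A.mulVecLin))) :
    ∀ i, (Int.gcd ℓ (r i) : ℤ) ∣ u i := by
  intro i
  set e : ℕ := AddMonoid.exponent ((Fin (k + 1) → ℤ) ⧸ LinearMap.range A.mulVecLin) with he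
  -- every vector times e lies in the range
  have hsmul : ∀ x : Fin (k+1) → ℤ, ∃ v, A.mulVec v = (e : ℤ) • x := by
    intro x
    have h0 : e • (Submodule.Quotient.mk x :
        (Fin (k + 1) → ℤ) ⧸ LinearMap.range A.mulVecLin) = 0 :=
      AddMonoid.exponent_nsmul_eq_zero _
    have : ((e : ℤ) • x) ∈ LinearMap.range A.mulVecLin := by
      rw [← Submodule.Quotient.mk_eq_zero, Submodule.Quotient.mk_smul]
      simpa using h0
    obtain ⟨v, hv⟩ := this
    exact ⟨v, by simpa [Matrix.mulVecLin_apply] using hv⟩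
  -- row computations
  have hrow0 : ∀ v : Fin (k+1) → ℤ, A.mulVec v 0 = ℓ * v 0 := by
    intro v
    rw [Matrix.mulVec, dotProduct]
    rw [Finset.sum_eq_single 0]
    · rw [hA00]
    · intro b _ hb
      rw [hAzero 0 b hb (Ne.symm hb), zero_mul]
    · simp
  have hrowi : ∀ v : Fin (k+1) → ℤ,
      A.mulVec v i.succ = u i * v 0 + r i * v i.succ := by
    intro v
    rw [Matrix.mulVec, dotProduct]
    rw [Finset.sum_eq_add_of_mem 0 i.succ (Finset.mem_univ _) (Finset.mem_univ _)
      (Fin.succ_ne_zero i).symm]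
    · rw [hAcol, hAdiag]
    · intro c _ hc
      rw [hAzero i.succ c hc.1 (Ne.symm hc.2), zero_mul]
  -- apply to basis vectors
  obtain ⟨v, hv⟩ := hsmul (Pi.single 0 1)
  obtain ⟨w, hw⟩ := hsmul (Pi.single i.succ 1)
  have hv0 : ℓ * v 0 = (e : ℤ) := by
    have := congrFun hv 0
    rw [hrow0] at this
    simpa using this
  have hvi : u i * v 0 + r i * v i.succ = 0 := by
    have := congrFun hv i.succ
    rw [hrowi] at this
    simpa [Pi.single_apply, (Fin.succ_ne_zero i)] using this
  have hw0 : w 0 = 0 := by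
    have := congrFun hw 0
    rw [hrow0] at this
    simp [Pi.single_apply, (Fin.succ_ne_zero i).symm] at this
    rcases this with h | h
    · omega
    · exact h
  have hwi : r i * w i.succ = (e : ℤ) := by
    have := congrFun hw i.succ
    rw [hrowi, hw0] at this
    simpa using this
  -- divisibilities
  have hle : ℓ ∣ (e : ℤ) := ⟨v 0, hv0.symm⟩
  have hre : r i ∣ (e : ℤ) := ⟨w i.succ, hwi.symm⟩
  set g : ℕ := Int.gcd ℓ (r i) with hg
  -- every prime factor of g divides u i
  have hprime : ∀ p : ℕ, p ∈ g.primeFactors → (p : ℤ) ∣ u i := by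
    intro p hp
    have hpp : p.Prime := Nat.prime_of_mem_primeFactors hp
    have hpg : p ∣ g := Nat.dvd_of_mem_primeFactors hp
    have hpl : (p : ℤ) ∣ ℓ := dvd_trans (Int.natCast_dvd_natCast.mpr hpg) (Int.gcd_dvd_left _ _)
    have hpr : (p : ℤ) ∣ r i := dvd_trans (Int.natCast_dvd_natCast.mpr hpg) (Int.gcd_dvd_right _ _)
    have hpv0 : ¬ (p : ℤ) ∣ v 0 := by
      intro hd
      have : ((p * p : ℕ) : ℤ) ∣ (e : ℤ) := by
        push_cast
        rw [← hv0]
        exact mul_dvd_mul hpl hd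
      have := hsf p (Int.natCast_dvd_natCast.mp this)
      exact hpp.ne_one (Nat.isUnit_iff.mp this)
    have hdvd : (p : ℤ) ∣ u i * v 0 := by
      have : u i * v 0 = -(r i * v i.succ) := by linarith
      rw [this]
      exact dvd_neg.mpr (hpr.mul_right _)
    have hpZ : Prime (p : ℤ) := Int.prime_iff_natAbs_prime.mpr (by simpa using hpp)
    rcases hpZ.dvd_mul.mp hdvd with h | h
    · exact h
    · exact absurd h hpv0
  -- g is squarefree
  have hgl : (g : ℤ) ∣ ℓ := Int.gcd_dvd_left _ _
  have hge : g ∣ e := by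
    have : (g : ℤ) ∣ (e : ℤ) := dvd_trans hgl hle
    exact Int.natCast_dvd_natCast.mp this
  have hgsf : Squarefree g := hsf.squarefree_of_dvd hge
  -- conclude
  have hgprod : ∏ p ∈ g.primeFactors, (p : ℤ) = (g : ℤ) := by
    rw [← Nat.cast_prod, Nat.prod_primeFactors_of_squarefree hgsf]
  have : g ∣ (u i).natAbs := by
    have : ∏ p ∈ g.primeFactors, p ∣ (u i).natAbs := by
      apply Finset.prod_primes_dvd
      · intro p hp
        exact (Nat.prime_of_mem_primeFactors (Finset.mem_def.mpr hp)).prime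
      · intro p hp
        have := hprime p hp
        rwa [Int.natCast_dvd] at this
    rwa [Nat.prod_primeFactors_of_squarefree hgsf] at this
  have := Int.natCast_dvd_natCast.mpr this
  exact dvd_trans this (Int.natAbs_dvd.mpr dvd_rfl)
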